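/- Fix integers k, n with 2 ≤ k < n. Let B and C be finite open partial (k,n)-Steiner systems whose intersection A = B ∩ C is a common substructure (the incidence relations of B and C agree on A), with A ≤_o B and A ≤_o C. Then there exist a finite open partial (k,n)-Steiner system D and embeddings f : B → D and g : C → D with f↾A = g↾A such that f(B) ≤_o D and g(C) ≤_o D. In particular, the class of finite open partial (k,n)-Steiner systems with the relation ≤_o has the amalgamation and joint embedding properties. -/

import Mathlib

namespace Steiner

variable {P L : Type}

/-- The blocks of `X` incident with the point `p`. -/
def blocksIn (I : P → L → Prop) (X : Set (P ⊕ L)) (p : P) : Set L :=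
  {b : L | Sum.inr b ∈ X ∧ I p b}

/-- The points of `X` incident with the block `b`. -/
def pointsIn (I : P → L → Prop) (X : Set (P ⊕ L)) (b : L) : Set P :=
  {p : P | Sum.inl p ∈ X ∧ I p b}

/-- An element is hyperfree in `X` if it is a point incident with at most one block of `X`,
or a block incident with at most `k` points of `X`. -/
def Hyperfree (k : ℕ) (I : P → L → Prop) (X : Set (P ⊕ L)) : (P ⊕ L) → Prop
  | Sum.inl p => (blocksIn I X p).encard ≤ 1
  | Sum.inr b => (pointsIn I X b).encard ≤ k

/-- `B` is open over `A`: every nonempty finite subset `C` of `B \ A` contains an element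
that is hyperfree in `A ∪ C`. -/
def OpenOver (k : ℕ) (I : P → L → Prop) (A B : Set (P ⊕ L)) : Prop :=
  ∀ C : Set (P ⊕ L), C ⊆ B \ A → C.Finite → C.Nonempty →
    ∃ c ∈ C, Hyperfree k I (A ∪ C) c

/-- `B` is open: every nonempty finite subset `C` of `B` contains an element hyperfree in `C`. -/
def IsOpen (k : ℕ) (I : P → L → Prop) (B : Set (P ⊕ L)) : Prop :=
  ∀ C : Set (P ⊕ L), C ⊆ B → C.Finite → C.Nonempty →
    ∃ c ∈ C, Hyperfree k I C c

/-- `X` with the incidence relation `I` is a partial `(k,n)`-Steiner system: any `k` distinct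
points of `X` are incident with at most one common block of `X`, and every block of `X` is
incident with at most `n` points of `X`. -/
def IsPartial (k n : ℕ) (I : P → L → Prop) (X : Set (P ⊕ L)) : Prop :=
  (∀ S : Set P, (∀ p ∈ S, Sum.inl p ∈ X) → S.encard = k →
    ∀ b b' : L, Sum.inr b ∈ X → Sum.inr b' ∈ X →
      (∀ p ∈ S, I p b) → (∀ p ∈ S, I p b') → b = b') ∧
  (∀ b : L, Sum.inr b ∈ X → (pointsIn I X b).encard ≤ n)

end Steiner

open Steiner

open Set

namespace Stmt7Aux

variable {P L : Type}

lemma openOver_point {k : ℕ} {I : P → L → Prop} {E D : Set (P ⊕ L)}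
    (h : OpenOver k I E D) {p : P} (hpD : Sum.inl p ∈ D) (hpE : Sum.inl p ∉ E) :
    {b : L | Sum.inr b ∈ E ∧ I p b}.encard ≤ 1 := by
  obtain ⟨c, hc, hhf⟩ := h {Sum.inl p}
    (by intro z hz; rw [Set.mem_singleton_iff] at hz; subst hz; exact ⟨hpD, hpE⟩)
    (Set.finite_singleton _) ⟨_, rfl⟩
  rw [Set.mem_singleton_iff] at hc; subst hc
  have h2 : (blocksIn I (E ∪ {Sum.inl p}) p).encard ≤ 1 := hhf
  have h3 : blocksIn I (E ∪ {Sum.inl p}) p = {b : L | Sum.inr b ∈ E ∧ I p b} := by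
    ext b; simp [blocksIn]
  rwa [h3] at h2

lemma openOver_block {k : ℕ} {I : P → L → Prop} {E D : Set (P ⊕ L)}
    (h : OpenOver k I E D) {b : L} (hbD : Sum.inr b ∈ D) (hbE : Sum.inr b ∉ E) :
    {q : P | Sum.inl q ∈ E ∧ I q b}.encard ≤ k := by
  obtain ⟨c, hc, hhf⟩ := h {Sum.inr b}
    (by intro z hz; rw [Set.mem_singleton_iff] at hz; subst hz; exact ⟨hbD, hbE⟩)
    (Set.finite_singleton _) ⟨_, rfl⟩
  rw [Set.mem_singleton_iff] at hc; subst hc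
  have h2 : (pointsIn I (E ∪ {Sum.inr b}) b).encard ≤ k := hhf
  have h3 : pointsIn I (E ∪ {Sum.inr b}) b = {q : P | Sum.inl q ∈ E ∧ I q b} := by
    ext q; simp [pointsIn]
  rwa [h3] at h2

lemma not_encard_le_one {α : Type*} {s : Set α} {a b : α} (ha : a ∈ s) (hb : b ∈ s)
    (hne : a ≠ b) : ¬ s.encard ≤ 1 :=
  fun h => hne (Set.encard_le_one_iff.1 h a b ha hb)

lemma openOver_insert_point {k : ℕ} {I : P → L → Prop} {E D : Set (P ⊕ L)}
    (h : OpenOver k I E D) {p : P}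
    (hpD : Sum.inl p ∈ D) (hpE : Sum.inl p ∉ E)
    {a : L} (haE : Sum.inr a ∈ E) (hpa : I p a) :
    OpenOver k I (insert (Sum.inl p) E) D := by
  intro Y hY hYfin hYne
  have hYD : Y ⊆ D \ E := fun z hz =>
    ⟨(hY hz).1, fun hzE => (hY hz).2 (Set.mem_insert_iff.2 (Or.inr hzE))⟩
  have hset : E ∪ insert (Sum.inl p) Y = insert (Sum.inl p) E ∪ Y := by
    ext z
    simp only [Set.mem_union, Set.mem_insert_iff]
    tauto
  obtain ⟨c, hc, hchf⟩ := h (insert (Sum.inl p) Y)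
    (by intro z hz
        rcases Set.mem_insert_iff.1 hz with rfl | hz
        · exact ⟨hpD, hpE⟩
        · exact hYD hz)
    (hYfin.insert _) ⟨_, Set.mem_insert _ _⟩
  rw [hset] at hchf
  rcases Set.mem_insert_iff.1 hc with rfl | hcY
  · have hphf : (blocksIn I (insert (Sum.inl p) E ∪ Y) p).encard ≤ 1 := hchf
    obtain ⟨c₂, hc₂, hc₂hf⟩ := h Y hYD hYfin hYne
    refine ⟨c₂, hc₂, ?_⟩
    cases c₂ with
    | inl q =>
      have hold : (blocksIn I (E ∪ Y) q).encard ≤ 1 := hc₂hf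
      have heq : blocksIn I (insert (Sum.inl p) E ∪ Y) q = blocksIn I (E ∪ Y) q := by
        ext b
        simp only [blocksIn, Set.mem_setOf_eq, Set.mem_union, Set.mem_insert_iff]
        constructor
        · rintro ⟨(hb | hb) | hb, hIb⟩
          · exact absurd hb (by simp)
          · exact ⟨Or.inl hb, hIb⟩
          · exact ⟨Or.inr hb, hIb⟩
        · rintro ⟨hb | hb, hIb⟩
          exacts [⟨Or.inl (Or.inr hb), hIb⟩, ⟨Or.inr hb, hIb⟩]
      show (blocksIn I (insert (Sum.inl p) E ∪ Y) q).encard ≤ 1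
      rw [heq]; exact hold
    | inr zb =>
      have hold : (pointsIn I (E ∪ Y) zb).encard ≤ (k : ℕ∞) := hc₂hf
      have hnpz : ¬ I p zb := by
        intro hpz
        have h1 : a ∈ blocksIn I (insert (Sum.inl p) E ∪ Y) p := ⟨Or.inl (Or.inr haE), hpa⟩
        have h2 : zb ∈ blocksIn I (insert (Sum.inl p) E ∪ Y) p := ⟨Or.inr hc₂, hpz⟩
        have hne : a ≠ zb := by rintro rfl; exact (hYD hc₂).2 haE
        exact not_encard_le_one h1 h2 hne hphf
      have heq : pointsIn I (insert (Sum.inl p) E ∪ Y) zb = pointsIn I (E ∪ Y) zb := by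
        ext q
        simp only [pointsIn, Set.mem_setOf_eq, Set.mem_union, Set.mem_insert_iff]
        constructor
        · rintro ⟨(hq | hq) | hq, hIq⟩
          · cases Sum.inl.inj hq; exact absurd hIq hnpz
          · exact ⟨Or.inl hq, hIq⟩
          · exact ⟨Or.inr hq, hIq⟩
        · rintro ⟨hq | hq, hIq⟩
          exacts [⟨Or.inl (Or.inr hq), hIq⟩, ⟨Or.inr hq, hIq⟩]
      show (pointsIn I (insert (Sum.inl p) E ∪ Y) zb).encard ≤ (k : ℕ∞)
      rw [heq]; exact hold
  · exact ⟨c, hcY, hchf⟩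

lemma openOver_insert_block {k : ℕ} {I : P → L → Prop} {E D : Set (P ⊕ L)}
    (h : OpenOver k I E D) {b : L}
    (hbD : Sum.inr b ∈ D) (hbE : Sum.inr b ∉ E)
    {T : Set P} (hT : ∀ t ∈ T, Sum.inl t ∈ E ∧ I t b) (hTcard : (k : ℕ∞) ≤ T.encard) :
    OpenOver k I (insert (Sum.inr b) E) D := by
  intro Y hY hYfin hYne
  have hYD : Y ⊆ D \ E := fun z hz =>
    ⟨(hY hz).1, fun hzE => (hY hz).2 (Set.mem_insert_iff.2 (Or.inr hzE))⟩
  have hset : E ∪ insert (Sum.inr b) Y = insert (Sum.inr b) E ∪ Y := by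
    ext z
    simp only [Set.mem_union, Set.mem_insert_iff]
    tauto
  obtain ⟨c, hc, hchf⟩ := h (insert (Sum.inr b) Y)
    (by intro z hz
        rcases Set.mem_insert_iff.1 hz with rfl | hz
        · exact ⟨hbD, hbE⟩
        · exact hYD hz)
    (hYfin.insert _) ⟨_, Set.mem_insert _ _⟩
  rw [hset] at hchf
  rcases Set.mem_insert_iff.1 hc with rfl | hcY
  · have hbhf : (pointsIn I (insert (Sum.inr b) E ∪ Y) b).encard ≤ (k : ℕ∞) := hchf
    have hTsub : T ⊆ pointsIn I (insert (Sum.inr b) E ∪ Y) b := fun t ht =>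
      ⟨Or.inl (Or.inr (hT t ht).1), (hT t ht).2⟩
    have hnoY : ∀ q : P, Sum.inl q ∈ Y → ¬ I q b := by
      intro q hq hIq
      have hqT : q ∉ T := fun hqT => (hYD hq).2 (hT q hqT).1
      have : insert q T ⊆ pointsIn I (insert (Sum.inr b) E ∪ Y) b := by
        intro t ht
        rcases Set.mem_insert_iff.1 ht with rfl | ht
        · exact ⟨Or.inr hq, hIq⟩
        · exact hTsub ht
      have hcard : (k : ℕ∞) + 1 ≤ (pointsIn I (insert (Sum.inr b) E ∪ Y) b).encard := by
        calc (k : ℕ∞) + 1 ≤ T.encard + 1 := by exact add_le_add_left hTcard 1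
        _ = (insert q T).encard := (Set.encard_insert_of_notMem hqT).symm
        _ ≤ _ := Set.encard_le_encard this
      have hlt : (k : ℕ∞) < (k : ℕ∞) + 1 := (ENat.lt_add_one_iff (by simp)).2 le_rfl
      exact absurd hbhf (not_le.2 (lt_of_lt_of_le hlt hcard))
    obtain ⟨c₂, hc₂, hc₂hf⟩ := h Y hYD hYfin hYne
    refine ⟨c₂, hc₂, ?_⟩
    cases c₂ with
    | inl q =>
      have hold : (blocksIn I (E ∪ Y) q).encard ≤ 1 := hc₂hf
      have heq : blocksIn I (insert (Sum.inr b) E ∪ Y) q = blocksIn I (E ∪ Y) q := by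
        ext b'
        simp only [blocksIn, Set.mem_setOf_eq, Set.mem_union, Set.mem_insert_iff]
        constructor
        · rintro ⟨(hb' | hb') | hb', hIb'⟩
          · cases Sum.inr.inj hb'; exact absurd hIb' (hnoY q hc₂)
          · exact ⟨Or.inl hb', hIb'⟩
          · exact ⟨Or.inr hb', hIb'⟩
        · rintro ⟨hb' | hb', hIb'⟩
          exacts [⟨Or.inl (Or.inr hb'), hIb'⟩, ⟨Or.inr hb', hIb'⟩]
      show (blocksIn I (insert (Sum.inr b) E ∪ Y) q).encard ≤ 1
      rw [heq]; exact hold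
    | inr zb =>
      have hold : (pointsIn I (E ∪ Y) zb).encard ≤ (k : ℕ∞) := hc₂hf
      have heq : pointsIn I (insert (Sum.inr b) E ∪ Y) zb = pointsIn I (E ∪ Y) zb := by
        ext q
        simp only [pointsIn, Set.mem_setOf_eq, Set.mem_union, Set.mem_insert_iff]
        constructor
        · rintro ⟨(hq | hq) | hq, hIq⟩
          · exact absurd hq (by simp)
          · exact ⟨Or.inl hq, hIq⟩
          · exact ⟨Or.inr hq, hIq⟩
        · rintro ⟨hq | hq, hIq⟩
          exacts [⟨Or.inl (Or.inr hq), hIq⟩, ⟨Or.inr hq, hIq⟩]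
      show (pointsIn I (insert (Sum.inr b) E ∪ Y) zb).encard ≤ (k : ℕ∞)
      rw [heq]; exact hold
  · exact ⟨c, hcY, hchf⟩

/-- HF-ordering lists -/
def HFL (k : ℕ) (IC : P → L → Prop) (C : Set (P ⊕ L)) : Set (P ⊕ L) → List (P ⊕ L) → Prop
  | Ci, [] => C ⊆ Ci
  | Ci, x :: r => x ∈ C \ Ci ∧ Hyperfree k IC (insert x Ci) x ∧ HFL k IC C (insert x Ci) r

lemma HFL_snoc {k : ℕ} {IC : P → L → Prop} {C' C : Set (P ⊕ L)} (hsub : C' ⊆ C) {c : P ⊕ L}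
    (hc : c ∈ C \ C') (hhf : Hyperfree k IC C c) (hCeq : insert c C' = C) :
    ∀ (l : List (P ⊕ L)) (Ci : Set (P ⊕ L)), Ci ⊆ C' → HFL k IC C' Ci l →
      HFL k IC C Ci (l ++ [c]) := by
  intro l
  induction l with
  | nil =>
    intro Ci hCi hfl
    have hCieq : Ci = C' := le_antisymm hCi hfl
    subst hCieq
    refine ⟨⟨hc.1, hc.2⟩, ?_, ?_⟩
    · rw [hCeq]; exact hhf
    · rw [hCeq]; exact subset_rfl
  | cons y r ih =>
    intro Ci hCi hfl
    obtain ⟨hy, hyhf, hr⟩ := hfl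
    exact ⟨⟨hsub hy.1, hy.2⟩, hyhf, ih (insert y Ci) (Set.insert_subset hy.1 hCi) hr⟩

lemma exists_hfl {k : ℕ} {IC : P → L → Prop} :
    ∀ (m : ℕ) (C A : Set (P ⊕ L)), C.Finite → (C \ A).ncard = m → A ⊆ C →
      OpenOver k IC A C → ∃ l : List (P ⊕ L), HFL k IC C A l := by
  intro m
  induction m with
  | zero =>
    intro C A hfin hcard hsub _
    refine ⟨[], ?_⟩
    have hemp : C \ A = ∅ := (Set.ncard_eq_zero (hfin.subset Set.diff_subset)).1 hcard
    intro z hz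
    by_contra hzA
    exact absurd (Set.mem_diff z |>.2 ⟨hz, hzA⟩) (by rw [hemp]; exact Set.notMem_empty z)
  | succ m ih =>
    intro C A hfin hcard hsub hopen
    have hne : (C \ A).Nonempty := by
      rw [Set.nonempty_iff_ne_empty]
      intro he
      rw [he, Set.ncard_empty] at hcard
      exact absurd hcard (by omega)
    obtain ⟨c, hc, hchf⟩ := hopen (C \ A) (le_refl _) (hfin.subset Set.diff_subset) hne
    have hCeq : A ∪ (C \ A) = C := Set.union_diff_cancel hsub
    rw [hCeq] at hchf
    have hcC : c ∈ C := hc.1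
    have hsub' : A ⊆ C \ {c} := fun z hz =>
      ⟨hsub hz, fun hzc => hc.2 (by rwa [Set.mem_singleton_iff.1 hzc] at hz)⟩
    have hopen' : OpenOver k IC A (C \ {c}) := fun Y hY hf hne' =>
      hopen Y (hY.trans (Set.diff_subset_diff_left Set.diff_subset)) hf hne'
    have hcard' : ((C \ {c}) \ A).ncard = m := by
      have heq : (C \ {c}) \ A = (C \ A) \ {c} := by
        ext z
        simp only [Set.mem_diff, Set.mem_singleton_iff]
        tauto
      rw [heq, Set.ncard_diff_singleton_of_mem hc, hcard]
      omega
    obtain ⟨l, hl⟩ := ih (C \ {c}) A (hfin.subset Set.diff_subset) hcard' hsub' hopen'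
    refine ⟨l ++ [c], HFL_snoc Set.diff_subset ⟨hcC, by simp⟩ hchf ?_ l A hsub' hl⟩
    rw [Set.insert_diff_singleton, Set.insert_eq_self.2 hcC]

/-- The amalgamation state. -/
structure AmSt (k n : ℕ) (IB IC : P → L → Prop) (B C Ci : Set (P ⊕ L)) where
  ID : (P ⊕ P) → (L ⊕ L) → Prop
  D : Set ((P ⊕ P) ⊕ (L ⊕ L))
  gp : P → P ⊕ P
  gl : L → L ⊕ L
  fin : D.Finite
  part : IsPartial k n ID D
  opn : IsOpen k ID D
  mapsB : Set.MapsTo (Sum.map Sum.inl Sum.inl) B D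
  reflB : ∀ p b, Sum.inl p ∈ B → Sum.inr b ∈ B → (ID (Sum.inl p) (Sum.inl b) ↔ IB p b)
  mapsC : Set.MapsTo (Sum.map gp gl) Ci D
  injC : Set.InjOn (Sum.map gp gl) Ci
  reflC : ∀ p b, Sum.inl p ∈ Ci → Sum.inr b ∈ Ci → (ID (gp p) (gl b) ↔ IC p b)
  agree : ∀ x ∈ B ∩ C, Sum.map Sum.inl Sum.inl x = Sum.map gp gl x
  openB : OpenOver k ID (Sum.map Sum.inl Sum.inl '' B) D
  openC : OpenOver k ID (Sum.map gp gl '' Ci) D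
  fresh : ∀ x ∈ C \ Ci, Sum.map Sum.inr Sum.inr x ∉ D
  supp : ∀ x y, ID x y → Sum.inl x ∈ D ∧ Sum.inr y ∈ D

variable {k n : ℕ} {IB IC : P → L → Prop} {B C : Set (P ⊕ L)}

lemma init (hk : 2 ≤ k) (hkn : k < n) (hBfin : B.Finite)
    (hBpartial : IsPartial k n IB B)
    (hBopen : Steiner.IsOpen k IB B)
    (hagree : ∀ (p : P) (b : L), Sum.inl p ∈ B ∩ C → Sum.inr b ∈ B ∩ C → (IB p b ↔ IC p b))
    (hAB : OpenOver k IB (B ∩ C) B) :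
    Nonempty (AmSt k n IB IC B C (B ∩ C)) := by
  classical
  set fm : (P ⊕ L) → (P ⊕ P) ⊕ (L ⊕ L) := Sum.map Sum.inl Sum.inl with hfm
  set ID0 : (P ⊕ P) → (L ⊕ L) → Prop := fun x y =>
    ∃ p b, Sum.inl p ∈ B ∧ Sum.inr b ∈ B ∧ IB p b ∧ x = Sum.inl p ∧ y = Sum.inl b with hID0
  have hID0elim : ∀ (p : P) (b : L), ID0 (Sum.inl p) (Sum.inl b) →
      Sum.inl p ∈ B ∧ Sum.inr b ∈ B ∧ IB p b := by
    rintro p b ⟨p₁, b₁, h1, h2, h3, hpe, hbe⟩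
    cases Sum.inl.inj hpe
    cases Sum.inl.inj hbe
    exact ⟨h1, h2, h3⟩
  have hmemP : ∀ (X0 : Set (P ⊕ L)) (p' : P ⊕ P),
      (Sum.inl p' ∈ fm '' X0) ↔ ∃ p, Sum.inl p ∈ X0 ∧ p' = Sum.inl p := by
    intro X0 p'
    constructor
    · rintro ⟨z, hz, heq⟩
      cases z with
      | inl p =>
        refine ⟨p, hz, ?_⟩
        exact (Sum.inl.inj heq).symm
      | inr b => exact absurd heq (by simp [fm])
    · rintro ⟨p, hp, rfl⟩
      exact ⟨Sum.inl p, hp, rfl⟩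
  have hmemL : ∀ (X0 : Set (P ⊕ L)) (b' : L ⊕ L),
      (Sum.inr b' ∈ fm '' X0) ↔ ∃ b, Sum.inr b ∈ X0 ∧ b' = Sum.inl b := by
    intro X0 b'
    constructor
    · rintro ⟨z, hz, heq⟩
      cases z with
      | inl p => exact absurd heq (by simp [fm])
      | inr b =>
        refine ⟨b, hz, ?_⟩
        exact (Sum.inr.inj heq).symm
    · rintro ⟨b, hb, rfl⟩
      exact ⟨Sum.inr b, hb, rfl⟩
  have hbl : ∀ (X0 : Set (P ⊕ L)) (p : P),
      blocksIn ID0 (fm '' X0) (Sum.inl p) ⊆ Sum.inl '' (blocksIn IB X0 p) := by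
    intro X0 p b' hb'
    obtain ⟨hmem, hID⟩ := hb'
    obtain ⟨p₁, b₁, hp₁, hb₁, hIBp, hpe, hbe⟩ := hID
    cases Sum.inl.inj hpe
    subst hbe
    obtain ⟨b₂, hb₂, hbeq⟩ := (hmemL X0 _).1 hmem
    cases Sum.inl.inj hbeq
    exact ⟨b₁, ⟨hb₂, hIBp⟩, rfl⟩
  have hpt : ∀ (X0 : Set (P ⊕ L)) (b : L),
      pointsIn ID0 (fm '' X0) (Sum.inl b) ⊆ Sum.inl '' (pointsIn IB X0 b) := by
    intro X0 b p' hp'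
    obtain ⟨hmem, hID⟩ := hp'
    obtain ⟨p₁, b₁, hp₁, hb₁, hIBp, hpe, hbe⟩ := hID
    cases Sum.inl.inj hbe
    subst hpe
    obtain ⟨p₂, hp₂, hpeq⟩ := (hmemP X0 _).1 hmem
    cases Sum.inl.inj hpeq
    exact ⟨p₁, ⟨hp₂, hIBp⟩, rfl⟩
  have hhfT : ∀ (X0 : Set (P ⊕ L)), ∀ c, Hyperfree k IB X0 c →
      Hyperfree k ID0 (fm '' X0) (fm c) := by
    intro X0 c hchf
    cases c with
    | inl p =>
      show (blocksIn ID0 (fm '' X0) (Sum.inl p)).encard ≤ 1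
      calc (blocksIn ID0 (fm '' X0) (Sum.inl p)).encard
          ≤ (Sum.inl '' blocksIn IB X0 p).encard := Set.encard_le_encard (hbl X0 p)
        _ = (blocksIn IB X0 p).encard := Sum.inl_injective.injOn.encard_image
        _ ≤ 1 := hchf
    | inr b =>
      show (pointsIn ID0 (fm '' X0) (Sum.inl b)).encard ≤ (k : ℕ∞)
      calc (pointsIn ID0 (fm '' X0) (Sum.inl b)).encard
          ≤ (Sum.inl '' pointsIn IB X0 b).encard := Set.encard_le_encard (hpt X0 b)
        _ = (pointsIn IB X0 b).encard := Sum.inl_injective.injOn.encard_image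
        _ ≤ (k : ℕ∞) := hchf
  refine ⟨⟨ID0, fm '' B, Sum.inl, Sum.inl, hBfin.image fm, ⟨?_, ?_⟩, ?_, ?_, ?_, ?_, ?_, ?_,
    ?_, ?_, ?_, ?_, ?_⟩⟩
  · -- partial (1)
    intro S hS hScard β β' hβ hβ' hIβ hIβ'
    obtain ⟨b, hbB, rfl⟩ := (hmemL B β).1 hβ
    obtain ⟨b', hb'B, rfl⟩ := (hmemL B β').1 hβ'
    set S0 : Set P := {p | Sum.inl p ∈ S} with hS0def
    have hSeq : S = Sum.inl '' S0 := by
      ext p'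
      constructor
      · intro hp'
        obtain ⟨p, hpB, rfl⟩ := (hmemP B p').1 (hS p' hp')
        exact ⟨p, hp', rfl⟩
      · rintro ⟨p, hp, rfl⟩; exact hp
    have hS0card : S0.encard = k := by
      rw [hSeq, Sum.inl_injective.injOn.encard_image] at hScard
      exact hScard
    have hmain : b = b' := by
      refine hBpartial.1 S0 ?_ hS0card b b' hbB hb'B ?_ ?_
      · intro p hp
        obtain ⟨p₂, hp₂, hpeq⟩ := (hmemP B _).1 (hS _ hp)
        cases Sum.inl.inj hpeq
        exact hp₂
      · intro p hp
        exact (hID0elim p b (hIβ _ hp)).2.2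
      · intro p hp
        exact (hID0elim p b' (hIβ' _ hp)).2.2
    rw [hmain]
  · -- partial (2)
    intro β hβ
    obtain ⟨b, hbB, rfl⟩ := (hmemL B β).1 hβ
    calc (pointsIn ID0 (fm '' B) (Sum.inl b)).encard
        ≤ (Sum.inl '' pointsIn IB B b).encard := Set.encard_le_encard (hpt B b)
      _ = (pointsIn IB B b).encard := Sum.inl_injective.injOn.encard_image
      _ ≤ (n : ℕ∞) := hBpartial.2 b hbB
  · -- open
    intro X hX hXfin hXne
    set X0 : Set (P ⊕ L) := {z ∈ B | fm z ∈ X} with hX0def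
    have hXeq : X = fm '' X0 := by
      ext x
      constructor
      · intro hx
        obtain ⟨z, hzB, rfl⟩ := hX hx
        exact ⟨z, ⟨hzB, hx⟩, rfl⟩
      · rintro ⟨z, hz, rfl⟩; exact hz.2
    have hX0ne : X0.Nonempty := by
      obtain ⟨x, hx⟩ := hXne
      obtain ⟨z, hz, rfl⟩ := hX hx
      exact ⟨z, hz, hx⟩
    obtain ⟨c, hc, hchf⟩ := hBopen X0 (Set.sep_subset _ _) (hBfin.subset (Set.sep_subset _ _)) hX0ne
    refine ⟨fm c, by rw [hXeq]; exact ⟨c, hc, rfl⟩, ?_⟩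
    rw [hXeq]
    exact hhfT X0 c hchf
  · -- mapsB
    intro z hz
    exact ⟨z, hz, rfl⟩
  · -- reflB
    intro p b hp hb
    constructor
    · intro h
      exact (hID0elim p b h).2.2
    · intro h
      exact ⟨p, b, hp, hb, h, rfl, rfl⟩
  · -- mapsC
    intro z hz
    exact ⟨z, hz.1, rfl⟩
  · -- injC
    intro u _ v _ huv
    cases u <;> cases v <;> simp [fm, Sum.map] at huv <;> simp [huv]
  · -- reflC
    intro p b hp hb
    constructor
    · intro h
      exact (hagree p b hp hb).1 (hID0elim p b h).2.2
    · intro h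
      exact ⟨p, b, hp.1, hb.1, (hagree p b hp hb).2 h, rfl, rfl⟩
  · -- agree
    intro x _
    rfl
  · -- openB
    intro Y hY _ hYne
    obtain ⟨y, hy⟩ := hYne
    have := hY hy
    exact absurd this.1 this.2
  · -- openC
    intro Y hY hYfin hYne
    set Y0 : Set (P ⊕ L) := {z ∈ B | fm z ∈ Y} with hY0def
    have hYD : Y ⊆ fm '' B := fun z hz => (hY hz).1
    have hYeq : Y = fm '' Y0 := by
      ext x
      constructor
      · intro hx
        obtain ⟨z, hzB, rfl⟩ := hYD hx
        exact ⟨z, ⟨hzB, hx⟩, rfl⟩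
      · rintro ⟨z, hz, rfl⟩; exact hz.2
    have hY0 : Y0 ⊆ B \ (B ∩ C) := by
      intro z hz
      refine ⟨hz.1, fun hzA => ?_⟩
      exact (hY hz.2).2 ⟨z, hzA, rfl⟩
    have hY0ne : Y0.Nonempty := by
      obtain ⟨x, hx⟩ := hYne
      obtain ⟨z, hz, rfl⟩ := hYD hx
      exact ⟨z, hz, hx⟩
    obtain ⟨c, hc, hchf⟩ := hAB Y0 hY0 (hBfin.subset (Set.sep_subset _ _)) hY0ne
    refine ⟨fm c, by rw [hYeq]; exact ⟨c, hc, rfl⟩, ?_⟩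
    have hun : (Sum.map Sum.inl Sum.inl '' (B ∩ C)) ∪ Y = fm '' ((B ∩ C) ∪ Y0) := by
      rw [Set.image_union, hYeq]
    rw [hun]
    exact hhfT _ c hchf
  · -- fresh
    intro z _ hmem
    obtain ⟨w, _, heq⟩ := hmem
    cases w <;> cases z <;> simp [fm, Sum.map] at heq
  · -- supp
    rintro x y ⟨p, b, hp, hb, hIBp, rfl, rfl⟩
    exact ⟨⟨Sum.inl p, hp, rfl⟩, ⟨Sum.inr b, hb, rfl⟩⟩


variable {Ci : Set (P ⊕ L)}

lemma AmSt.EsubD (s : AmSt k n IB IC B C Ci) : Sum.map s.gp s.gl '' Ci ⊆ s.D :=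
  fun _ hz => by obtain ⟨w, hw, rfl⟩ := hz; exact s.mapsC hw

lemma AmSt.bmemE (s : AmSt k n IB IC B C Ci) {b : L} (hb : Sum.inr b ∈ Ci) :
    Sum.inr (s.gl b) ∈ Sum.map s.gp s.gl '' Ci := ⟨Sum.inr b, hb, rfl⟩

lemma AmSt.pmemE (s : AmSt k n IB IC B C Ci) {q : P} (hq : Sum.inl q ∈ Ci) :
    Sum.inl (s.gp q) ∈ Sum.map s.gp s.gl '' Ci := ⟨Sum.inl q, hq, rfl⟩

lemma AmSt.glinj (s : AmSt k n IB IC B C Ci) {b b' : L} (hb : Sum.inr b ∈ Ci)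
    (hb' : Sum.inr b' ∈ Ci) (heq : s.gl b = s.gl b') : b = b' := by
  have h2 : Sum.map s.gp s.gl (Sum.inr b) = Sum.map s.gp s.gl (Sum.inr b') :=
    congrArg Sum.inr heq
  exact Sum.inr.inj (s.injC hb hb' h2)

lemma AmSt.gpinj (s : AmSt k n IB IC B C Ci) {q q' : P} (hq : Sum.inl q ∈ Ci)
    (hq' : Sum.inl q' ∈ Ci) (heq : s.gp q = s.gp q') : q = q' := by
  have h2 : Sum.map s.gp s.gl (Sum.inl q) = Sum.map s.gp s.gl (Sum.inl q') :=
    congrArg Sum.inl heq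
  exact Sum.inl.inj (s.injC hq hq' h2)

lemma stepPointFresh (hkn : k < n) (hCfin : C.Finite) (hCpart : IsPartial k n IC C)
    (hACi : B ∩ C ⊆ Ci) (hCi : Ci ⊆ C)
    (s : AmSt k n IB IC B C Ci) {xp : P} (hx : Sum.inl xp ∈ C \ Ci)
    (hhf : (blocksIn IC Ci xp).encard ≤ 1)
    (hroom : ∀ b ∈ blocksIn IC Ci xp, (pointsIn s.ID s.D (s.gl b)).encard < (n : ℕ∞)) :
    Nonempty (AmSt k n IB IC B C (insert (Sum.inl xp) Ci)) := by
  classical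
  set E : Set ((P ⊕ P) ⊕ (L ⊕ L)) := Sum.map s.gp s.gl '' Ci with hEdef
  set z' : (P ⊕ P) ⊕ (L ⊕ L) := Sum.inl (Sum.inr xp) with hz'def
  set ID' : (P ⊕ P) → (L ⊕ L) → Prop := fun x' y' =>
    s.ID x' y' ∨ (x' = Sum.inr xp ∧ ∃ b ∈ blocksIn IC Ci xp, y' = s.gl b) with hID'def
  set gp' : P → P ⊕ P := Function.update s.gp xp (Sum.inr xp) with hgp'def
  have hID'iff : ∀ x' y', ID' x' y' ↔
      (s.ID x' y' ∨ (x' = Sum.inr xp ∧ ∃ b ∈ blocksIn IC Ci xp, y' = s.gl b)) :=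
    fun _ _ => Iff.rfl
  have hfreshD : Sum.inl (Sum.inr xp : P ⊕ P) ∉ s.D := s.fresh (Sum.inl xp) hx
  have hIDnew_src : ∀ y, ¬ s.ID (Sum.inr xp) y := fun y h => hfreshD (s.supp _ _ h).1
  have huniq : ∀ b ∈ blocksIn IC Ci xp, ∀ b' ∈ blocksIn IC Ci xp, b = b' :=
    fun b hb b' hb' => Set.encard_le_one_iff.1 hhf b b' hb hb'
  have hmapeq : ∀ z ∈ Ci, Sum.map gp' s.gl z = Sum.map s.gp s.gl z := by
    intro z hz
    cases z with
    | inl q =>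
      have hne : q ≠ xp := fun h => hx.2 (h ▸ hz)
      show Sum.inl (gp' q) = Sum.inl (s.gp q)
      rw [hgp'def, Function.update_of_ne hne]
    | inr b => rfl
  have hgp'xp : gp' xp = Sum.inr xp := by rw [hgp'def, Function.update_self]
  have hE' : Sum.map gp' s.gl '' insert (Sum.inl xp) Ci = insert z' E := by
    rw [Set.image_insert_eq]
    congr 1
    · show Sum.inl (gp' xp) = z'
      rw [hgp'xp]
    · exact Set.image_congr hmapeq
  have hnewHF : ∀ S : Set ((P ⊕ P) ⊕ (L ⊕ L)), (blocksIn ID' S (Sum.inr xp)).encard ≤ 1 := by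
    intro S
    refine Set.encard_le_one_iff.2 ?_
    rintro b b' ⟨_, hbI⟩ ⟨_, hb'I⟩
    rcases (hID'iff _ _).1 hbI with h | ⟨_, ⟨b0, hb0, rfl⟩⟩
    · exact absurd h (hIDnew_src b)
    rcases (hID'iff _ _).1 hb'I with h | ⟨_, ⟨b1, hb1, rfl⟩⟩
    · exact absurd h (hIDnew_src _)
    exact congrArg s.gl (huniq _ hb0 _ hb1)
  have hbl' : ∀ (S : Set ((P ⊕ P) ⊕ (L ⊕ L))) (q : P ⊕ P), q ≠ Sum.inr xp →
      blocksIn ID' S q = blocksIn s.ID S q := by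
    intro S q hq
    ext b
    constructor
    · rintro ⟨hm, hI⟩
      rcases (hID'iff _ _).1 hI with h | ⟨h, _⟩
      · exact ⟨hm, h⟩
      · exact absurd h hq
    · rintro ⟨hm, hI⟩
      exact ⟨hm, (hID'iff _ _).2 (Or.inl hI)⟩
  have hpt' : ∀ (S : Set ((P ⊕ P) ⊕ (L ⊕ L))) (b : L ⊕ L), z' ∉ S →
      pointsIn ID' S b = pointsIn s.ID S b := by
    intro S b hzS
    ext q
    constructor
    · rintro ⟨hm, hI⟩
      rcases (hID'iff _ _).1 hI with h | ⟨rfl, _⟩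
      · exact ⟨hm, h⟩
      · exact absurd hm hzS
    · rintro ⟨hm, hI⟩
      exact ⟨hm, (hID'iff _ _).2 (Or.inl hI)⟩
  refine ⟨⟨ID', insert z' s.D, gp', s.gl, s.fin.insert _, ⟨?_, ?_⟩, ?_, ?_, ?_, ?_, ?_, ?_,
    ?_, ?_, ?_, ?_, ?_⟩⟩
  · -- partial (1)
    intro S hS hScard β β' hβ hβ' hIβ hIβ'
    by_cases hxpS : (Sum.inr xp : P ⊕ P) ∈ S
    · have hβa : ∃ b0 ∈ blocksIn IC Ci xp, β = s.gl b0 := by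
        rcases (hID'iff _ _).1 (hIβ _ hxpS) with h | ⟨_, hb⟩
        · exact absurd h (hIDnew_src β)
        · exact hb
      have hβ'a : ∃ b0 ∈ blocksIn IC Ci xp, β' = s.gl b0 := by
        rcases (hID'iff _ _).1 (hIβ' _ hxpS) with h | ⟨_, hb⟩
        · exact absurd h (hIDnew_src β')
        · exact hb
      obtain ⟨b0, hb0, rfl⟩ := hβa
      obtain ⟨b1, hb1, rfl⟩ := hβ'a
      exact congrArg s.gl (huniq _ hb0 _ hb1)
    · have hSold : ∀ p' ∈ S, Sum.inl p' ∈ s.D := by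
        intro p' hp'
        rcases Set.mem_insert_iff.1 (hS p' hp') with h | h
        · exact absurd (Sum.inl.inj h ▸ hp') hxpS
        · exact h
      have hβD : Sum.inr β ∈ s.D := by
        rcases Set.mem_insert_iff.1 hβ with h | h
        · exact absurd h (by simp [hz'def])
        · exact h
      have hβ'D : Sum.inr β' ∈ s.D := by
        rcases Set.mem_insert_iff.1 hβ' with h | h
        · exact absurd h (by simp [hz'def])
        · exact h
      refine s.part.1 S hSold hScard β β' hβD hβ'D ?_ ?_
      · intro p' hp'
        rcases (hID'iff _ _).1 (hIβ _ hp') with h | ⟨heq, _⟩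
        · exact h
        · exact absurd (heq ▸ hp') hxpS
      · intro p' hp'
        rcases (hID'iff _ _).1 (hIβ' _ hp') with h | ⟨heq, _⟩
        · exact h
        · exact absurd (heq ▸ hp') hxpS
  · -- partial (2)
    intro β hβ
    have hβD : Sum.inr β ∈ s.D := by
      rcases Set.mem_insert_iff.1 hβ with h | h
      · exact absurd h (by simp [hz'def])
      · exact h
    by_cases hnew : ∃ b0 ∈ blocksIn IC Ci xp, β = s.gl b0
    · obtain ⟨b0, hb0, rfl⟩ := hnew
      have hsub : pointsIn ID' (insert z' s.D) (s.gl b0) ⊆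
          insert (Sum.inr xp) (pointsIn s.ID s.D (s.gl b0)) := by
        rintro q ⟨hqm, hqI⟩
        rcases (hID'iff _ _).1 hqI with h | ⟨rfl, _⟩
        · exact Set.mem_insert_iff.2 (Or.inr ⟨(s.supp _ _ h).1, h⟩)
        · exact Set.mem_insert _ _
      calc (pointsIn ID' (insert z' s.D) (s.gl b0)).encard
          ≤ (insert (Sum.inr xp) (pointsIn s.ID s.D (s.gl b0))).encard :=
            Set.encard_le_encard hsub
        _ ≤ (pointsIn s.ID s.D (s.gl b0)).encard + 1 := Set.encard_insert_le _ _
        _ ≤ (n : ℕ∞) := Order.add_one_le_of_lt (hroom b0 hb0)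
    · have heq2 : pointsIn ID' (insert z' s.D) β = pointsIn s.ID s.D β := by
        ext q
        constructor
        · rintro ⟨hqm, hqI⟩
          rcases (hID'iff _ _).1 hqI with h | ⟨rfl, hb⟩
          · exact ⟨(s.supp _ _ h).1, h⟩
          · exact absurd hb hnew
        · rintro ⟨hqm, hqI⟩
          exact ⟨Set.mem_insert_iff.2 (Or.inr hqm), (hID'iff _ _).2 (Or.inl hqI)⟩
      rw [heq2]
      exact s.part.2 β hβD
  · -- open
    intro X hX hXfin hXne
    by_cases hzX : z' ∈ X
    · exact ⟨Sum.inl (Sum.inr xp), hzX, hnewHF X⟩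
    · have hXD : X ⊆ s.D := by
        intro z hz
        rcases Set.mem_insert_iff.1 (hX hz) with h | h
        · exact absurd (h ▸ hz) hzX
        · exact h
      obtain ⟨c, hc, hchf⟩ := s.opn X hXD hXfin hXne
      refine ⟨c, hc, ?_⟩
      cases c with
      | inl q =>
        have hqne : q ≠ Sum.inr xp := fun h => hfreshD (h ▸ (hXD hc))
        show (blocksIn ID' X q).encard ≤ 1
        rw [hbl' X q hqne]
        exact hchf
      | inr zb =>
        show (pointsIn ID' X zb).encard ≤ (k : ℕ∞)
        rw [hpt' X zb hzX]
        exact hchf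
  · -- mapsB
    exact fun z hz => Set.mem_insert_iff.2 (Or.inr (s.mapsB hz))
  · -- reflB
    intro p b hp hb
    constructor
    · intro h
      rcases (hID'iff _ _).1 h with h | ⟨h, _⟩
      · exact (s.reflB p b hp hb).1 h
      · exact absurd h (by simp)
    · intro h
      exact (hID'iff _ _).2 (Or.inl ((s.reflB p b hp hb).2 h))
  · -- mapsC
    intro z hz
    rcases Set.mem_insert_iff.1 hz with rfl | hz
    · show Sum.inl (gp' xp) ∈ insert z' s.D
      rw [hgp'xp]
      exact Set.mem_insert _ _
    · rw [hmapeq z hz]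
      exact Set.mem_insert_iff.2 (Or.inr (s.mapsC hz))
  · -- injC
    intro u hu v hv huv
    rcases Set.mem_insert_iff.1 hu with rfl | hu
    · rcases Set.mem_insert_iff.1 hv with rfl | hv
      · rfl
      · exfalso
        rw [hmapeq v hv] at huv
        have : Sum.inl (gp' xp) = Sum.map s.gp s.gl v := huv
        rw [hgp'xp] at this
        exact hfreshD (this ▸ s.mapsC hv)
    · rcases Set.mem_insert_iff.1 hv with rfl | hv
      · exfalso
        rw [hmapeq u hu] at huv
        have : Sum.map s.gp s.gl u = Sum.inl (gp' xp) := huv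
        rw [hgp'xp] at this
        exact hfreshD (this ▸ s.mapsC hu)
      · rw [hmapeq u hu, hmapeq v hv] at huv
        exact s.injC hu hv huv
  · -- reflC
    intro p b hp hb
    have hbCi : Sum.inr b ∈ Ci := by
      rcases Set.mem_insert_iff.1 hb with h | h
      · exact absurd h (by simp)
      · exact h
    rcases Set.mem_insert_iff.1 hp with hpx | hpCi
    · cases Sum.inl.inj hpx
      show ID' (gp' xp) (s.gl b) ↔ IC xp b
      rw [hgp'xp]
      constructor
      · intro h
        rcases (hID'iff _ _).1 h with h | ⟨_, ⟨b0, hb0, hglb⟩⟩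
        · exact absurd h (hIDnew_src _)
        · have hbb0 : b = b0 := s.glinj hbCi hb0.1 hglb
          rw [hbb0]
          exact hb0.2
      · intro h
        exact (hID'iff _ _).2 (Or.inr ⟨rfl, b, ⟨hbCi, h⟩, rfl⟩)
    · have hpne : p ≠ xp := fun h => hx.2 (h ▸ hpCi)
      show ID' (gp' p) (s.gl b) ↔ IC p b
      rw [hgp'def, Function.update_of_ne hpne]
      constructor
      · intro h
        rcases (hID'iff _ _).1 h with h | ⟨heq, _⟩
        · exact (s.reflC p b hpCi hbCi).1 h
        · exfalso
          have hd : Sum.inl (s.gp p) ∈ s.D := s.mapsC hpCi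
          rw [heq] at hd
          exact hfreshD hd
      · intro h
        exact (hID'iff _ _).2 (Or.inl ((s.reflC p b hpCi hbCi).2 h))
  · -- agree
    intro z hz
    rw [hmapeq z (hACi hz)]
    exact s.agree z hz
  · -- openB
    intro Y hY hYfin hYne
    by_cases hzY : z' ∈ Y
    · exact ⟨Sum.inl (Sum.inr xp), hzY, hnewHF _⟩
    · have hYD : Y ⊆ s.D \ (Sum.map Sum.inl Sum.inl '' B) := by
        intro z hz
        have h1 := hY hz
        refine ⟨?_, h1.2⟩
        rcases Set.mem_insert_iff.1 h1.1 with h | h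
        · exact absurd (h ▸ hz) hzY
        · exact h
      obtain ⟨c, hc, hchf⟩ := s.openB Y hYD hYfin hYne
      refine ⟨c, hc, ?_⟩
      have hznBY : z' ∉ Sum.map Sum.inl Sum.inl '' B ∪ Y := by
        rintro (⟨w, _, heq⟩ | h)
        · cases w <;> simp [hz'def, Sum.map] at heq
        · exact hzY h
      cases c with
      | inl q =>
        have hqne : q ≠ Sum.inr xp := fun h => hfreshD (h ▸ (hYD hc).1)
        show (blocksIn ID' (Sum.map Sum.inl Sum.inl '' B ∪ Y) q).encard ≤ 1
        rw [hbl' _ q hqne]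
        exact hchf
      | inr zb =>
        show (pointsIn ID' (Sum.map Sum.inl Sum.inl '' B ∪ Y) zb).encard ≤ (k : ℕ∞)
        rw [hpt' _ zb hznBY]
        exact hchf
  · -- openC
    intro Y hY hYfin hYne
    have hz'E' : z' ∈ Sum.map gp' s.gl '' insert (Sum.inl xp) Ci := by
      rw [hE']
      exact Set.mem_insert _ _
    have hzY : z' ∉ Y := fun h => (hY h).2 hz'E'
    have hYD : Y ⊆ s.D \ E := by
      intro z hz
      have h1 := hY hz
      constructor
      · rcases Set.mem_insert_iff.1 h1.1 with h | h
        · exact absurd (h ▸ hz) hzY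
        · exact h
      · intro hzE
        exact h1.2 (by rw [hE']; exact Set.mem_insert_iff.2 (Or.inr hzE))
    obtain ⟨c, hc, hchf⟩ := s.openC Y hYD hYfin hYne
    refine ⟨c, hc, ?_⟩
    have hset : Sum.map gp' s.gl '' insert (Sum.inl xp) Ci ∪ Y = insert z' (E ∪ Y) := by
      rw [hE', Set.insert_union]
    rw [hset]
    cases c with
    | inl q =>
      have hqne : q ≠ Sum.inr xp := fun h => hfreshD (h ▸ (hYD hc).1)
      show (blocksIn ID' (insert z' (E ∪ Y)) q).encard ≤ 1
      have h2 : blocksIn ID' (insert z' (E ∪ Y)) q = blocksIn ID' (E ∪ Y) q := by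
        ext b
        constructor
        · rintro ⟨hm, hI⟩
          rcases Set.mem_insert_iff.1 hm with h | h
          · exact absurd h (by simp [hz'def])
          · exact ⟨h, hI⟩
        · rintro ⟨hm, hI⟩
          exact ⟨Set.mem_insert_iff.2 (Or.inr hm), hI⟩
      rw [h2, hbl' _ q hqne]
      exact hchf
    | inr zb =>
      show (pointsIn ID' (insert z' (E ∪ Y)) zb).encard ≤ (k : ℕ∞)
      have h1 : pointsIn ID' (insert z' (E ∪ Y)) zb = pointsIn s.ID (E ∪ Y) zb := by
        ext q
        constructor
        · rintro ⟨hqm, hqI⟩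
          rcases (hID'iff _ _).1 hqI with h | ⟨rfl, ⟨b0, hb0, heq⟩⟩
          · refine ⟨?_, h⟩
            rcases Set.mem_insert_iff.1 hqm with he | he
            · exfalso
              cases Sum.inl.inj he
              exact hfreshD (s.supp _ _ h).1
            · exact he
          · exfalso
            have hbe : Sum.inr zb ∈ E := by rw [heq]; exact s.bmemE hb0.1
            exact (hYD hc).2 hbe
        · rintro ⟨hqm, hqI⟩
          exact ⟨Set.mem_insert_iff.2 (Or.inr hqm), (hID'iff _ _).2 (Or.inl hqI)⟩
      rw [h1]
      exact hchf
  · -- fresh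
    intro z hz hmem
    have hz2 : z ∈ C \ Ci := ⟨hz.1, fun h => hz.2 (Set.mem_insert_iff.2 (Or.inr h))⟩
    rcases Set.mem_insert_iff.1 hmem with h | h
    · cases z with
      | inl q =>
        have hq : q = xp := Sum.inr.inj (Sum.inl.inj h)
        exact hz.2 (by rw [hq]; exact Set.mem_insert _ _)
      | inr b => exact absurd h (by simp [hz'def, Sum.map])
    · exact s.fresh z hz2 h
  · -- supp
    intro x' y' h
    rcases (hID'iff _ _).1 h with h | ⟨rfl, ⟨b0, hb0, rfl⟩⟩
    · exact ⟨Set.mem_insert_iff.2 (Or.inr (s.supp _ _ h).1),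
        Set.mem_insert_iff.2 (Or.inr (s.supp _ _ h).2)⟩
    · exact ⟨Set.mem_insert _ _,
        Set.mem_insert_iff.2 (Or.inr (s.EsubD (s.bmemE hb0.1)))⟩

lemma stepPointIdent (hkn : k < n) (hCfin : C.Finite) (hCpart : IsPartial k n IC C)
    (hACi : B ∩ C ⊆ Ci) (hCi : Ci ⊆ C)
    (s : AmSt k n IB IC B C Ci) {xp : P} (hx : Sum.inl xp ∈ C \ Ci)
    (hhf : (blocksIn IC Ci xp).encard ≤ 1)
    {c₀ : L} (hc₀ : c₀ ∈ blocksIn IC Ci xp)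
    (hfull : (n : ℕ∞) ≤ (pointsIn s.ID s.D (s.gl c₀)).encard) :
    Nonempty (AmSt k n IB IC B C (insert (Sum.inl xp) Ci)) := by
  classical
  set E : Set ((P ⊕ P) ⊕ (L ⊕ L)) := Sum.map s.gp s.gl '' Ci with hEdef
  set a : L ⊕ L := s.gl c₀ with hadef
  have haE : Sum.inr a ∈ E := s.bmemE hc₀.1
  have huniq : ∀ b ∈ blocksIn IC Ci xp, ∀ b' ∈ blocksIn IC Ci xp, b = b' :=
    fun b hb b' hb' => Set.encard_le_one_iff.1 hhf b b' hb hb'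
  set EA : Set (P ⊕ P) := {p' | Sum.inl p' ∈ E ∧ s.ID p' a} with hEAdef
  have hEAeq : EA = s.gp '' {q | Sum.inl q ∈ Ci ∧ IC q c₀} := by
    ext p'
    constructor
    · rintro ⟨⟨w, hw, heq⟩, hIDa⟩
      cases w with
      | inl q =>
        cases Sum.inl.inj heq
        exact ⟨q, ⟨hw, (s.reflC q c₀ hw hc₀.1).1 hIDa⟩, rfl⟩
      | inr b => exact absurd heq (by simp [Sum.map])
    · rintro ⟨q, ⟨hq, hIq⟩, rfl⟩
      exact ⟨s.pmemE hq, (s.reflC q c₀ hq hc₀.1).2 hIq⟩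
  have hxpnot : xp ∉ {q | Sum.inl q ∈ Ci ∧ IC q c₀} := fun h => hx.2 h.1
  have hCiPts : insert xp {q | Sum.inl q ∈ Ci ∧ IC q c₀} ⊆ pointsIn IC C c₀ := by
    intro q hq
    rcases Set.mem_insert_iff.1 hq with rfl | hq
    · exact ⟨hx.1, hc₀.2⟩
    · exact ⟨hCi hq.1, hq.2⟩
  have hcount : {q | Sum.inl q ∈ Ci ∧ IC q c₀}.encard + 1 ≤ (n : ℕ∞) := by
    calc {q | Sum.inl q ∈ Ci ∧ IC q c₀}.encard + 1
        = (insert xp {q | Sum.inl q ∈ Ci ∧ IC q c₀}).encard :=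
          (Set.encard_insert_of_notMem hxpnot).symm
      _ ≤ (pointsIn IC C c₀).encard := Set.encard_le_encard hCiPts
      _ ≤ (n : ℕ∞) := hCpart.2 c₀ (hCi hc₀.1)
  have hEAcount : EA.encard + 1 ≤ (n : ℕ∞) := by
    rw [hEAeq]
    exact le_trans (add_le_add_left (Set.encard_image_le _ _) 1) hcount
  have hEAle : EA.encard ≤ (n : ℕ∞) := le_trans (self_le_add_right _ 1) hEAcount
  have hEAne : EA.encard ≠ ⊤ := fun h => by
    rw [h] at hEAle
    exact absurd (top_le_iff.1 hEAle) (by simp)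
  have hEAlt : EA.encard < (pointsIn s.ID s.D a).encard := by
    have h1 : EA.encard < EA.encard + 1 := (ENat.lt_add_one_iff hEAne).2 le_rfl
    exact lt_of_lt_of_le h1 (le_trans hEAcount hfull)
  have hex : ∃ p', p' ∈ pointsIn s.ID s.D a ∧ p' ∉ EA := by
    by_contra hcon
    push_neg at hcon
    exact absurd (Set.encard_le_encard fun p' hp' => hcon p' hp') (not_le.2 hEAlt)
  obtain ⟨p, hpPts, hpEA⟩ := hex
  have hpD : Sum.inl p ∈ s.D := hpPts.1
  have hpa : s.ID p a := hpPts.2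
  have hpE : Sum.inl p ∉ E := fun h => hpEA ⟨h, hpa⟩
  set gp' : P → P ⊕ P := Function.update s.gp xp p with hgp'def
  have hgp'xp : gp' xp = p := by rw [hgp'def, Function.update_self]
  have hmapeq : ∀ z ∈ Ci, Sum.map gp' s.gl z = Sum.map s.gp s.gl z := by
    intro z hz
    cases z with
    | inl q =>
      have hne : q ≠ xp := fun h => hx.2 (h ▸ hz)
      show Sum.inl (gp' q) = Sum.inl (s.gp q)
      rw [hgp'def, Function.update_of_ne hne]
    | inr b => rfl
  have hE' : Sum.map gp' s.gl '' insert (Sum.inl xp) Ci = insert (Sum.inl p) E := by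
    rw [Set.image_insert_eq]
    congr 1
    · show Sum.inl (gp' xp) = Sum.inl p
      rw [hgp'xp]
    · exact Set.image_congr hmapeq
  refine ⟨⟨s.ID, s.D, gp', s.gl, s.fin, s.part, s.opn, s.mapsB, s.reflB, ?_, ?_, ?_, ?_,
    s.openB, ?_, ?_, s.supp⟩⟩
  · -- mapsC
    intro z hz
    rcases Set.mem_insert_iff.1 hz with rfl | hz
    · show Sum.inl (gp' xp) ∈ s.D
      rw [hgp'xp]
      exact hpD
    · rw [hmapeq z hz]
      exact s.mapsC hz
  · -- injC
    intro u hu v hv huv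
    rcases Set.mem_insert_iff.1 hu with rfl | hu
    · rcases Set.mem_insert_iff.1 hv with rfl | hv
      · rfl
      · exfalso
        rw [hmapeq v hv] at huv
        have h2 : Sum.inl (gp' xp) = Sum.map s.gp s.gl v := huv
        rw [hgp'xp] at h2
        exact hpE (h2 ▸ ⟨v, hv, rfl⟩)
    · rcases Set.mem_insert_iff.1 hv with rfl | hv
      · exfalso
        rw [hmapeq u hu] at huv
        have h2 : Sum.map s.gp s.gl u = Sum.inl (gp' xp) := huv
        rw [hgp'xp] at h2
        exact hpE (h2 ▸ ⟨u, hu, rfl⟩)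
      · rw [hmapeq u hu, hmapeq v hv] at huv
        exact s.injC hu hv huv
  · -- reflC
    intro q b hq hb
    have hbCi : Sum.inr b ∈ Ci := by
      rcases Set.mem_insert_iff.1 hb with h | h
      · exact absurd h (by simp)
      · exact h
    rcases Set.mem_insert_iff.1 hq with hqx | hqCi
    · cases Sum.inl.inj hqx
      show s.ID (gp' xp) (s.gl b) ↔ IC xp b
      rw [hgp'xp]
      constructor
      · intro h
        have hsing := openOver_point s.openC hpD hpE
        have h1 : s.gl b ∈ {β | Sum.inr β ∈ E ∧ s.ID p β} := ⟨s.bmemE hbCi, h⟩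
        have h2 : a ∈ {β | Sum.inr β ∈ E ∧ s.ID p β} := ⟨haE, hpa⟩
        have h3 : s.gl b = a := Set.encard_le_one_iff.1 hsing _ _ h1 h2
        have hbc : b = c₀ := s.glinj hbCi hc₀.1 h3
        rw [hbc]
        exact hc₀.2
      · intro h
        have hbc : b = c₀ := huniq b ⟨hbCi, h⟩ c₀ hc₀
        rw [hbc]
        exact hpa
    · have hqne : q ≠ xp := fun h => hx.2 (h ▸ hqCi)
      show s.ID (gp' q) (s.gl b) ↔ IC q b
      rw [hgp'def, Function.update_of_ne hqne]
      exact s.reflC q b hqCi hbCi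
  · -- agree
    intro z hz
    rw [hmapeq z (hACi hz)]
    exact s.agree z hz
  · -- openC
    rw [hE']
    exact openOver_insert_point s.openC hpD hpE haE hpa
  · -- fresh
    intro z hz hmem
    exact s.fresh z ⟨hz.1, fun h => hz.2 (Set.mem_insert_iff.2 (Or.inr h))⟩ hmem

lemma stepBlockFresh (hkn : k < n) (hCfin : C.Finite) (hCpart : IsPartial k n IC C)
    (hACi : B ∩ C ⊆ Ci) (hCi : Ci ⊆ C)
    (s : AmSt k n IB IC B C Ci) {xb : L} (hx : Sum.inr xb ∈ C \ Ci)
    (hhf : (pointsIn IC Ci xb).encard ≤ (k : ℕ∞))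
    (hnid : ¬((pointsIn IC Ci xb).encard = (k : ℕ∞) ∧ ∃ b', Sum.inr b' ∈ s.D ∧
      ∀ t ∈ s.gp '' (pointsIn IC Ci xb), s.ID t b')) :
    Nonempty (AmSt k n IB IC B C (insert (Sum.inr xb) Ci)) := by
  classical
  set E : Set ((P ⊕ P) ⊕ (L ⊕ L)) := Sum.map s.gp s.gl '' Ci with hEdef
  set z' : (P ⊕ P) ⊕ (L ⊕ L) := Sum.inr (Sum.inr xb) with hz'def
  set T : Set (P ⊕ P) := s.gp '' (pointsIn IC Ci xb) with hTdef
  set ID' : (P ⊕ P) → (L ⊕ L) → Prop := fun x' y' =>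
    s.ID x' y' ∨ (x' ∈ T ∧ y' = Sum.inr xb) with hID'def
  set gl' : L → L ⊕ L := Function.update s.gl xb (Sum.inr xb) with hgl'def
  have hID'iff : ∀ x' y', ID' x' y' ↔ (s.ID x' y' ∨ (x' ∈ T ∧ y' = Sum.inr xb)) :=
    fun _ _ => Iff.rfl
  have hfreshD : Sum.inr (Sum.inr xb : L ⊕ L) ∉ s.D := s.fresh (Sum.inr xb) hx
  have hIDnew : ∀ x', ¬ s.ID x' (Sum.inr xb) := fun x' h => hfreshD (s.supp _ _ h).2
  have hgpInjOn : Set.InjOn s.gp (pointsIn IC Ci xb) :=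
    fun q hq q' hq' heq => s.gpinj hq.1 hq'.1 heq
  have hTsubE : ∀ t ∈ T, Sum.inl t ∈ E := by
    rintro t ⟨q, hq, rfl⟩
    exact s.pmemE hq.1
  have hTcard : T.encard ≤ (k : ℕ∞) := le_trans (Set.encard_image_le _ _) hhf
  have hTiff : ∀ q, Sum.inl q ∈ Ci → (s.gp q ∈ T ↔ IC q xb) := by
    intro q hq
    constructor
    · rintro ⟨q2, hq2, heq⟩
      have hqq : q2 = q := s.gpinj hq2.1 hq heq
      exact hqq ▸ hq2.2
    · intro h
      exact ⟨q, ⟨hq, h⟩, rfl⟩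
  have hmapeq : ∀ z ∈ Ci, Sum.map s.gp gl' z = Sum.map s.gp s.gl z := by
    intro z hz
    cases z with
    | inl q => rfl
    | inr b =>
      have hne : b ≠ xb := fun h => hx.2 (h ▸ hz)
      show Sum.inr (gl' b) = Sum.inr (s.gl b)
      rw [hgl'def, Function.update_of_ne hne]
  have hgl'xb : gl' xb = Sum.inr xb := by rw [hgl'def, Function.update_self]
  have hE' : Sum.map s.gp gl' '' insert (Sum.inr xb) Ci = insert z' E := by
    rw [Set.image_insert_eq]
    congr 1
    · show Sum.inr (gl' xb) = z'
      rw [hgl'xb]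
    · exact Set.image_congr hmapeq
  have hnewHF : ∀ S : Set ((P ⊕ P) ⊕ (L ⊕ L)),
      (pointsIn ID' S (Sum.inr xb)).encard ≤ (k : ℕ∞) := by
    intro S
    refine le_trans (Set.encard_le_encard ?_) hTcard
    rintro q ⟨_, hqI⟩
    rcases (hID'iff _ _).1 hqI with h | ⟨h, _⟩
    · exact absurd h (hIDnew _)
    · exact h
  have hbl' : ∀ (S : Set ((P ⊕ P) ⊕ (L ⊕ L))) (q : P ⊕ P), z' ∉ S →
      blocksIn ID' S q = blocksIn s.ID S q := by
    intro S q hzS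
    ext b
    constructor
    · rintro ⟨hm, hI⟩
      rcases (hID'iff _ _).1 hI with h | ⟨_, rfl⟩
      · exact ⟨hm, h⟩
      · exact absurd hm hzS
    · rintro ⟨hm, hI⟩
      exact ⟨hm, (hID'iff _ _).2 (Or.inl hI)⟩
  have hpt' : ∀ (S : Set ((P ⊕ P) ⊕ (L ⊕ L))) (b : L ⊕ L), b ≠ Sum.inr xb →
      pointsIn ID' S b = pointsIn s.ID S b := by
    intro S b hb
    ext q
    constructor
    · rintro ⟨hm, hI⟩
      rcases (hID'iff _ _).1 hI with h | ⟨_, h⟩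
      · exact ⟨hm, h⟩
      · exact absurd h hb
    · rintro ⟨hm, hI⟩
      exact ⟨hm, (hID'iff _ _).2 (Or.inl hI)⟩
  refine ⟨⟨ID', insert z' s.D, s.gp, gl', s.fin.insert _, ⟨?_, ?_⟩, ?_, ?_, ?_, ?_, ?_, ?_,
    ?_, ?_, ?_, ?_, ?_⟩⟩
  · -- partial (1)
    intro S hS hScard β β' hβ hβ' hIβ hIβ'
    have hSold : ∀ p' ∈ S, Sum.inl p' ∈ s.D := by
      intro p' hp'
      rcases Set.mem_insert_iff.1 (hS p' hp') with h | h
      · exact absurd h (by simp [hz'def])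
      · exact h
    have hkey : ∀ β2 : L ⊕ L, Sum.inr β2 ∈ insert z' s.D → β2 ≠ Sum.inr xb →
        (∀ p' ∈ S, ID' p' (Sum.inr xb)) → (∀ p' ∈ S, ID' p' β2) → False := by
      intro β2 hβ2 hβ2ne hIx hIo
      have hST : S ⊆ T := by
        intro p' hp'
        rcases (hID'iff _ _).1 (hIx _ hp') with h | ⟨h, _⟩
        · exact absurd h (hIDnew _)
        · exact h
      have hTfin : T.Finite := (Set.encard_le_coe_iff.1 hTcard).1
      have hTk : T.encard = (k : ℕ∞) :=
        le_antisymm hTcard (by rw [← hScard]; exact Set.encard_le_encard hST)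
      have hSeqT : S = T := hTfin.eq_of_subset_of_encard_le' hST (by rw [hTk, hScard])
      have hPcard : (pointsIn IC Ci xb).encard = (k : ℕ∞) := by
        rw [← hgpInjOn.encard_image]
        exact hTk
      refine hnid ⟨hPcard, β2, ?_, ?_⟩
      · rcases Set.mem_insert_iff.1 hβ2 with h | h
        · exact absurd (Sum.inr.inj h) hβ2ne
        · exact h
      · intro t ht
        have htS : t ∈ S := by rw [hSeqT]; exact ht
        rcases (hID'iff _ _).1 (hIo _ htS) with h | ⟨_, h⟩
        · exact h
        · exact absurd h hβ2ne
    by_cases hβx : β = Sum.inr xb <;> by_cases hβ'x : β' = Sum.inr xb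
    · rw [hβx, hβ'x]
    · exact absurd (hkey β' hβ' hβ'x (fun p' hp' => hβx ▸ hIβ p' hp') hIβ') not_false
    · exact absurd (hkey β hβ hβx (fun p' hp' => hβ'x ▸ hIβ' p' hp') hIβ) not_false
    · have hβD : Sum.inr β ∈ s.D := by
        rcases Set.mem_insert_iff.1 hβ with h | h
        · exact absurd (Sum.inr.inj h) hβx
        · exact h
      have hβ'D : Sum.inr β' ∈ s.D := by
        rcases Set.mem_insert_iff.1 hβ' with h | h
        · exact absurd (Sum.inr.inj h) hβ'x
        · exact h
      refine s.part.1 S hSold hScard β β' hβD hβ'D ?_ ?_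
      · intro p' hp'
        rcases (hID'iff _ _).1 (hIβ _ hp') with h | ⟨_, h⟩
        · exact h
        · exact absurd h hβx
      · intro p' hp'
        rcases (hID'iff _ _).1 (hIβ' _ hp') with h | ⟨_, h⟩
        · exact h
        · exact absurd h hβ'x
  · -- partial (2)
    intro β hβ
    by_cases hβx : β = Sum.inr xb
    · rw [hβx]
      exact le_trans (hnewHF _) (Nat.cast_le.2 hkn.le)
    · have hβD : Sum.inr β ∈ s.D := by
        rcases Set.mem_insert_iff.1 hβ with h | h
        · exact absurd (Sum.inr.inj h) hβx
        · exact h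
      have heq2 : pointsIn ID' (insert z' s.D) β = pointsIn s.ID s.D β := by
        ext q
        constructor
        · rintro ⟨hqm, hqI⟩
          rcases (hID'iff _ _).1 hqI with h | ⟨_, h⟩
          · exact ⟨(s.supp _ _ h).1, h⟩
          · exact absurd h hβx
        · rintro ⟨hqm, hqI⟩
          exact ⟨Set.mem_insert_iff.2 (Or.inr hqm), (hID'iff _ _).2 (Or.inl hqI)⟩
      rw [heq2]
      exact s.part.2 β hβD
  · -- open
    intro X hX hXfin hXne
    by_cases hzX : z' ∈ X
    · exact ⟨Sum.inr (Sum.inr xb), hzX, hnewHF X⟩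
    · have hXD : X ⊆ s.D := by
        intro z hz
        rcases Set.mem_insert_iff.1 (hX hz) with h | h
        · exact absurd (h ▸ hz) hzX
        · exact h
      obtain ⟨c, hc, hchf⟩ := s.opn X hXD hXfin hXne
      refine ⟨c, hc, ?_⟩
      cases c with
      | inl q =>
        show (blocksIn ID' X q).encard ≤ 1
        rw [hbl' X q hzX]
        exact hchf
      | inr zb =>
        have hzbne : zb ≠ Sum.inr xb := fun h => hfreshD (h ▸ (hXD hc))
        show (pointsIn ID' X zb).encard ≤ (k : ℕ∞)
        rw [hpt' X zb hzbne]
        exact hchf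
  · -- mapsB
    exact fun z hz => Set.mem_insert_iff.2 (Or.inr (s.mapsB hz))
  · -- reflB
    intro p b hp hb
    constructor
    · intro h
      rcases (hID'iff _ _).1 h with h | ⟨_, h⟩
      · exact (s.reflB p b hp hb).1 h
      · exact absurd h (by simp)
    · intro h
      exact (hID'iff _ _).2 (Or.inl ((s.reflB p b hp hb).2 h))
  · -- mapsC
    intro z hz
    rcases Set.mem_insert_iff.1 hz with rfl | hz
    · show Sum.inr (gl' xb) ∈ insert z' s.D
      rw [hgl'xb]
      exact Set.mem_insert _ _
    · rw [hmapeq z hz]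
      exact Set.mem_insert_iff.2 (Or.inr (s.mapsC hz))
  · -- injC
    intro u hu v hv huv
    rcases Set.mem_insert_iff.1 hu with rfl | hu
    · rcases Set.mem_insert_iff.1 hv with rfl | hv
      · rfl
      · exfalso
        rw [hmapeq v hv] at huv
        have h2 : Sum.inr (gl' xb) = Sum.map s.gp s.gl v := huv
        rw [hgl'xb] at h2
        exact hfreshD (h2 ▸ s.mapsC hv)
    · rcases Set.mem_insert_iff.1 hv with rfl | hv
      · exfalso
        rw [hmapeq u hu] at huv
        have h2 : Sum.map s.gp s.gl u = Sum.inr (gl' xb) := huv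
        rw [hgl'xb] at h2
        exact hfreshD (h2 ▸ s.mapsC hu)
      · rw [hmapeq u hu, hmapeq v hv] at huv
        exact s.injC hu hv huv
  · -- reflC
    intro p b hp hb
    have hpCi : Sum.inl p ∈ Ci := by
      rcases Set.mem_insert_iff.1 hp with h | h
      · exact absurd h (by simp)
      · exact h
    rcases Set.mem_insert_iff.1 hb with hbx | hbCi
    · cases Sum.inr.inj hbx
      show ID' (s.gp p) (gl' xb) ↔ IC p xb
      rw [hgl'xb]
      constructor
      · intro h
        rcases (hID'iff _ _).1 h with h | ⟨h, _⟩
        · exact absurd h (hIDnew _)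
        · exact (hTiff p hpCi).1 h
      · intro h
        exact (hID'iff _ _).2 (Or.inr ⟨(hTiff p hpCi).2 h, rfl⟩)
    · have hbne : b ≠ xb := fun h => hx.2 (h ▸ hbCi)
      show ID' (s.gp p) (gl' b) ↔ IC p b
      rw [hgl'def, Function.update_of_ne hbne]
      constructor
      · intro h
        rcases (hID'iff _ _).1 h with h | ⟨_, heq⟩
        · exact (s.reflC p b hpCi hbCi).1 h
        · exfalso
          have hd : Sum.inr (s.gl b) ∈ s.D := s.EsubD (s.bmemE hbCi)
          rw [heq] at hd
          exact hfreshD hd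
      · intro h
        exact (hID'iff _ _).2 (Or.inl ((s.reflC p b hpCi hbCi).2 h))
  · -- agree
    intro z hz
    rw [hmapeq z (hACi hz)]
    exact s.agree z hz
  · -- openB
    intro Y hY hYfin hYne
    by_cases hzY : z' ∈ Y
    · exact ⟨Sum.inr (Sum.inr xb), hzY, hnewHF _⟩
    · have hYD : Y ⊆ s.D \ (Sum.map Sum.inl Sum.inl '' B) := by
        intro z hz
        have h1 := hY hz
        refine ⟨?_, h1.2⟩
        rcases Set.mem_insert_iff.1 h1.1 with h | h
        · exact absurd (h ▸ hz) hzY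
        · exact h
      obtain ⟨c, hc, hchf⟩ := s.openB Y hYD hYfin hYne
      refine ⟨c, hc, ?_⟩
      have hznBY : z' ∉ Sum.map Sum.inl Sum.inl '' B ∪ Y := by
        rintro (⟨w, _, heq⟩ | h)
        · cases w <;> simp [hz'def, Sum.map] at heq
        · exact hzY h
      cases c with
      | inl q =>
        show (blocksIn ID' (Sum.map Sum.inl Sum.inl '' B ∪ Y) q).encard ≤ 1
        rw [hbl' _ q hznBY]
        exact hchf
      | inr zb =>
        have hzbne : zb ≠ Sum.inr xb := fun h => hfreshD (h ▸ (hYD hc).1)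
        show (pointsIn ID' (Sum.map Sum.inl Sum.inl '' B ∪ Y) zb).encard ≤ (k : ℕ∞)
        rw [hpt' _ zb hzbne]
        exact hchf
  · -- openC
    intro Y hY hYfin hYne
    have hz'E' : z' ∈ Sum.map s.gp gl' '' insert (Sum.inr xb) Ci := by
      rw [hE']
      exact Set.mem_insert _ _
    have hzY : z' ∉ Y := fun h => (hY h).2 hz'E'
    have hYD : Y ⊆ s.D \ E := by
      intro z hz
      have h1 := hY hz
      constructor
      · rcases Set.mem_insert_iff.1 h1.1 with h | h
        · exact absurd (h ▸ hz) hzY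
        · exact h
      · intro hzE
        exact h1.2 (by rw [hE']; exact Set.mem_insert_iff.2 (Or.inr hzE))
    obtain ⟨c, hc, hchf⟩ := s.openC Y hYD hYfin hYne
    refine ⟨c, hc, ?_⟩
    have hset : Sum.map s.gp gl' '' insert (Sum.inr xb) Ci ∪ Y = insert z' (E ∪ Y) := by
      rw [hE', Set.insert_union]
    rw [hset]
    cases c with
    | inl q =>
      show (blocksIn ID' (insert z' (E ∪ Y)) q).encard ≤ 1
      have h2 : blocksIn ID' (insert z' (E ∪ Y)) q = blocksIn s.ID (E ∪ Y) q := by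
        ext b
        constructor
        · rintro ⟨hm, hI⟩
          rcases (hID'iff _ _).1 hI with h | ⟨hqT, rfl⟩
          · refine ⟨?_, h⟩
            rcases Set.mem_insert_iff.1 hm with he | he
            · exfalso
              cases Sum.inr.inj he
              exact hfreshD (s.supp _ _ h).2
            · exact he
          · exact absurd (hTsubE _ hqT) (hYD hc).2
        · rintro ⟨hm, hI⟩
          exact ⟨Set.mem_insert_iff.2 (Or.inr hm), (hID'iff _ _).2 (Or.inl hI)⟩
      rw [h2]
      exact hchf
    | inr zb =>
      have hzbne : zb ≠ Sum.inr xb := fun h => hfreshD (h ▸ (hYD hc).1)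
      show (pointsIn ID' (insert z' (E ∪ Y)) zb).encard ≤ (k : ℕ∞)
      have h1 : pointsIn ID' (insert z' (E ∪ Y)) zb = pointsIn s.ID (E ∪ Y) zb := by
        ext q
        constructor
        · rintro ⟨hqm, hqI⟩
          rcases (hID'iff _ _).1 hqI with h | ⟨_, heq⟩
          · refine ⟨?_, h⟩
            rcases Set.mem_insert_iff.1 hqm with he | he
            · exact absurd he (by simp [hz'def])
            · exact he
          · exact absurd heq hzbne
        · rintro ⟨hqm, hqI⟩
          exact ⟨Set.mem_insert_iff.2 (Or.inr hqm), (hID'iff _ _).2 (Or.inl hqI)⟩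
      rw [h1]
      exact hchf
  · -- fresh
    intro z hz hmem
    have hz2 : z ∈ C \ Ci := ⟨hz.1, fun h => hz.2 (Set.mem_insert_iff.2 (Or.inr h))⟩
    rcases Set.mem_insert_iff.1 hmem with h | h
    · cases z with
      | inl q => exact absurd h (by simp [hz'def, Sum.map])
      | inr b =>
        have hb : b = xb := Sum.inr.inj (Sum.inr.inj h)
        exact hz.2 (by rw [hb]; exact Set.mem_insert _ _)
    · exact s.fresh z hz2 h
  · -- supp
    intro x' y' h
    rcases (hID'iff _ _).1 h with h | ⟨hT', rfl⟩
    · exact ⟨Set.mem_insert_iff.2 (Or.inr (s.supp _ _ h).1),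
        Set.mem_insert_iff.2 (Or.inr (s.supp _ _ h).2)⟩
    · exact ⟨Set.mem_insert_iff.2 (Or.inr (s.EsubD (hTsubE _ hT'))), Set.mem_insert _ _⟩

lemma stepBlockIdent (hkn : k < n) (hCfin : C.Finite) (hCpart : IsPartial k n IC C)
    (hACi : B ∩ C ⊆ Ci) (hCi : Ci ⊆ C)
    (s : AmSt k n IB IC B C Ci) {xb : L} (hx : Sum.inr xb ∈ C \ Ci)
    (hhf : (pointsIn IC Ci xb).encard ≤ (k : ℕ∞))
    (hP : (pointsIn IC Ci xb).encard = (k : ℕ∞)) {b' : L ⊕ L} (hb'D : Sum.inr b' ∈ s.D)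
    (hall : ∀ t ∈ s.gp '' (pointsIn IC Ci xb), s.ID t b') :
    Nonempty (AmSt k n IB IC B C (insert (Sum.inr xb) Ci)) := by
  classical
  set E : Set ((P ⊕ P) ⊕ (L ⊕ L)) := Sum.map s.gp s.gl '' Ci with hEdef
  set T : Set (P ⊕ P) := s.gp '' (pointsIn IC Ci xb) with hTdef
  have hgpInjOn : Set.InjOn s.gp (pointsIn IC Ci xb) :=
    fun q hq q' hq' heq => s.gpinj hq.1 hq'.1 heq
  have hTk : T.encard = (k : ℕ∞) := by
    rw [hTdef, hgpInjOn.encard_image]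
    exact hP
  have hb'E : Sum.inr b' ∉ E := by
    rintro ⟨w, hw, heq⟩
    cases w with
    | inl q => simp [Sum.map] at heq
    | inr c =>
      have hglc : s.gl c = b' := Sum.inr.inj heq
      have hmemb : ∀ q ∈ pointsIn IC Ci xb, Sum.inl q ∈ C := fun q hq => hCi hq.1
      have hinc : ∀ q ∈ pointsIn IC Ci xb, IC q c := by
        intro q hq
        have h1 : s.ID (s.gp q) b' := hall _ ⟨q, hq, rfl⟩
        rw [← hglc] at h1
        exact (s.reflC q c hq.1 hw).1 h1
      have hceq : c = xb := hCpart.1 (pointsIn IC Ci xb) hmemb hP c xb (hCi hw) hx.1 hinc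
        (fun q hq => hq.2)
      exact hx.2 (hceq ▸ hw)
  have hTsub : T ⊆ {t : P ⊕ P | Sum.inl t ∈ E ∧ s.ID t b'} := by
    rintro t ⟨q, hq, rfl⟩
    exact ⟨s.pmemE hq.1, hall _ ⟨q, hq, rfl⟩⟩
  have hEb := openOver_block s.openC hb'D hb'E
  have hEbfin : {t : P ⊕ P | Sum.inl t ∈ E ∧ s.ID t b'}.Finite := (Set.encard_le_coe_iff.1 hEb).1
  have hTeq : {t : P ⊕ P | Sum.inl t ∈ E ∧ s.ID t b'} = T :=
    (hEbfin.eq_of_subset_of_encard_le' hTsub (by rw [hTk]; exact hEb)).symm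
  set gl' : L → L ⊕ L := Function.update s.gl xb b' with hgl'def
  have hgl'xb : gl' xb = b' := by rw [hgl'def, Function.update_self]
  have hmapeq : ∀ z ∈ Ci, Sum.map s.gp gl' z = Sum.map s.gp s.gl z := by
    intro z hz
    cases z with
    | inl q => rfl
    | inr b =>
      have hne : b ≠ xb := fun h => hx.2 (h ▸ hz)
      show Sum.inr (gl' b) = Sum.inr (s.gl b)
      rw [hgl'def, Function.update_of_ne hne]
  have hE' : Sum.map s.gp gl' '' insert (Sum.inr xb) Ci = insert (Sum.inr b') E := by
    rw [Set.image_insert_eq]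
    congr 1
    · show Sum.inr (gl' xb) = Sum.inr b'
      rw [hgl'xb]
    · exact Set.image_congr hmapeq
  refine ⟨⟨s.ID, s.D, s.gp, gl', s.fin, s.part, s.opn, s.mapsB, s.reflB, ?_, ?_, ?_, ?_,
    s.openB, ?_, ?_, s.supp⟩⟩
  · -- mapsC
    intro z hz
    rcases Set.mem_insert_iff.1 hz with rfl | hz
    · show Sum.inr (gl' xb) ∈ s.D
      rw [hgl'xb]
      exact hb'D
    · rw [hmapeq z hz]
      exact s.mapsC hz
  · -- injC
    intro u hu v hv huv
    rcases Set.mem_insert_iff.1 hu with rfl | hu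
    · rcases Set.mem_insert_iff.1 hv with rfl | hv
      · rfl
      · exfalso
        rw [hmapeq v hv] at huv
        have h2 : Sum.inr (gl' xb) = Sum.map s.gp s.gl v := huv
        rw [hgl'xb] at h2
        exact hb'E (h2 ▸ ⟨v, hv, rfl⟩)
    · rcases Set.mem_insert_iff.1 hv with rfl | hv
      · exfalso
        rw [hmapeq u hu] at huv
        have h2 : Sum.map s.gp s.gl u = Sum.inr (gl' xb) := huv
        rw [hgl'xb] at h2
        exact hb'E (h2 ▸ ⟨u, hu, rfl⟩)
      · rw [hmapeq u hu, hmapeq v hv] at huv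
        exact s.injC hu hv huv
  · -- reflC
    intro q b hq hb
    have hqCi : Sum.inl q ∈ Ci := by
      rcases Set.mem_insert_iff.1 hq with h | h
      · exact absurd h (by simp)
      · exact h
    rcases Set.mem_insert_iff.1 hb with hbx | hbCi
    · cases Sum.inr.inj hbx
      show s.ID (s.gp q) (gl' xb) ↔ IC q xb
      rw [hgl'xb]
      constructor
      · intro h
        have hqT : s.gp q ∈ T := by
          rw [← hTeq]
          exact ⟨s.pmemE hqCi, h⟩
        obtain ⟨q2, hq2, heq⟩ := hqT
        have hqq : q2 = q := s.gpinj hq2.1 hqCi heq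
        exact hqq ▸ hq2.2
      · intro h
        exact hall _ ⟨q, ⟨hqCi, h⟩, rfl⟩
    · have hbne : b ≠ xb := fun h => hx.2 (h ▸ hbCi)
      show s.ID (s.gp q) (gl' b) ↔ IC q b
      rw [hgl'def, Function.update_of_ne hbne]
      exact s.reflC q b hqCi hbCi
  · -- agree
    intro z hz
    rw [hmapeq z (hACi hz)]
    exact s.agree z hz
  · -- openC
    rw [hE']
    refine openOver_insert_block (T := T) s.openC hb'D hb'E ?_ ?_
    · intro t ht
      rw [← hTeq] at ht
      exact ht
    · exact le_of_eq hTk.symm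
  · -- fresh
    intro z hz hmem
    exact s.fresh z ⟨hz.1, fun h => hz.2 (Set.mem_insert_iff.2 (Or.inr h))⟩ hmem

lemma step (hk : 2 ≤ k) (hkn : k < n) (hCfin : C.Finite) (hCpart : IsPartial k n IC C)
    {Ci : Set (P ⊕ L)} (hACi : B ∩ C ⊆ Ci) (hCi : Ci ⊆ C)
    (s : AmSt k n IB IC B C Ci) {x : P ⊕ L} (hx : x ∈ C \ Ci)
    (hhf : Hyperfree k IC (insert x Ci) x) :
    Nonempty (AmSt k n IB IC B C (insert x Ci)) := by
  classical
  cases x with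
  | inl xp =>
    have hhf' : (blocksIn IC Ci xp).encard ≤ 1 := by
      have h0 : (blocksIn IC (insert (Sum.inl xp) Ci) xp).encard ≤ 1 := hhf
      have heq : blocksIn IC (insert (Sum.inl xp) Ci) xp = blocksIn IC Ci xp := by
        ext b
        simp [blocksIn, Set.mem_insert_iff]
      rwa [heq] at h0
    by_cases hroom : ∀ b ∈ blocksIn IC Ci xp, (pointsIn s.ID s.D (s.gl b)).encard < (n : ℕ∞)
    · exact stepPointFresh hkn hCfin hCpart hACi hCi s hx hhf' hroom
    · push_neg at hroom
      obtain ⟨c₀, hc₀, hfull⟩ := hroom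
      exact stepPointIdent hkn hCfin hCpart hACi hCi s hx hhf' hc₀ hfull
  | inr xb =>
    have hhf' : (pointsIn IC Ci xb).encard ≤ (k : ℕ∞) := by
      have h0 : (pointsIn IC (insert (Sum.inr xb) Ci) xb).encard ≤ (k : ℕ∞) := hhf
      have heq : pointsIn IC (insert (Sum.inr xb) Ci) xb = pointsIn IC Ci xb := by
        ext q
        simp [pointsIn, Set.mem_insert_iff]
      rwa [heq] at h0
    by_cases hid : (pointsIn IC Ci xb).encard = (k : ℕ∞) ∧ ∃ b', Sum.inr b' ∈ s.D ∧
        ∀ t ∈ s.gp '' (pointsIn IC Ci xb), s.ID t b'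
    · obtain ⟨hP, b', hb'D, hall⟩ := hid
      exact stepBlockIdent hkn hCfin hCpart hACi hCi s hx hhf' hP hb'D hall
    · exact stepBlockFresh hkn hCfin hCpart hACi hCi s hx hhf' hid

lemma chain (hk : 2 ≤ k) (hkn : k < n) (hCfin : C.Finite) (hCpart : IsPartial k n IC C) :
    ∀ (l : List (P ⊕ L)) (Ci : Set (P ⊕ L)), B ∩ C ⊆ Ci → Ci ⊆ C → HFL k IC C Ci l →
      Nonempty (AmSt k n IB IC B C Ci) → Nonempty (AmSt k n IB IC B C C) := by
  intro l
  induction l with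
  | nil =>
    intro Ci hA hCi hfl hs
    have : Ci = C := le_antisymm hCi hfl
    rwa [this] at hs
  | cons x r ih =>
    intro Ci hA hCi hfl hs
    obtain ⟨hx, hhf, hr⟩ := hfl
    refine ih (insert x Ci) ?_ ?_ hr ?_
    · exact hA.trans (Set.subset_insert _ _)
    · exact Set.insert_subset hx.1 hCi
    · exact hs.elim fun s => step hk hkn hCfin hCpart hA hCi s hx hhf

end Stmt7Aux


theorem stmt7 {P L : Type} (k n : ℕ) (hk : 2 ≤ k) (hkn : k < n)
    (IB IC : P → L → Prop) (B C : Set (P ⊕ L))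
    (hBfin : B.Finite) (hCfin : C.Finite)
    (hBpartial : IsPartial k n IB B) (hCpartial : IsPartial k n IC C)
    (hBopen : IsOpen k IB B) (hCopen : IsOpen k IC C)
    -- the intersection A = B ∩ C is a common substructure:
    (hagree : ∀ (p : P) (b : L), Sum.inl p ∈ B ∩ C → Sum.inr b ∈ B ∩ C → (IB p b ↔ IC p b))
    (hAB : OpenOver k IB (B ∩ C) B) (hAC : OpenOver k IC (B ∩ C) C) :
    ∃ (P' L' : Type) (ID : P' → L' → Prop) (D : Set (P' ⊕ L'))
      (fp gp : P → P') (fl gl : L → L'),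
      D.Finite ∧ IsPartial k n ID D ∧ IsOpen k ID D ∧
      Set.MapsTo (Sum.map fp fl) B D ∧ Set.MapsTo (Sum.map gp gl) C D ∧
      Set.InjOn (Sum.map fp fl) B ∧ Set.InjOn (Sum.map gp gl) C ∧
      (∀ (p : P) (b : L), Sum.inl p ∈ B → Sum.inr b ∈ B → (ID (fp p) (fl b) ↔ IB p b)) ∧
      (∀ (p : P) (b : L), Sum.inl p ∈ C → Sum.inr b ∈ C → (ID (gp p) (gl b) ↔ IC p b)) ∧
      (∀ x ∈ B ∩ C, Sum.map fp fl x = Sum.map gp gl x) ∧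
      OpenOver k ID (Sum.map fp fl '' B) D ∧
      OpenOver k ID (Sum.map gp gl '' C) D := by
  obtain ⟨l, hl⟩ := Stmt7Aux.exists_hfl (k := k) (IC := IC) ((C \ (B ∩ C)).ncard) C (B ∩ C)
    hCfin rfl Set.inter_subset_right hAC
  obtain ⟨s⟩ := Stmt7Aux.chain hk hkn hCfin hCpartial l (B ∩ C) (le_refl _)
    Set.inter_subset_right hl
    (Stmt7Aux.init hk hkn hBfin hBpartial hBopen hagree hAB)
  refine ⟨P ⊕ P, L ⊕ L, s.ID, s.D, Sum.inl, s.gp, Sum.inl, s.gl,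
    s.fin, s.part, s.opn, s.mapsB, s.mapsC, ?_, s.injC, s.reflB, s.reflC, s.agree,
    s.openB, s.openC⟩
  intro u _ v _ huv
  cases u <;> cases v <;> simp [Sum.map] at huv <;> simp [huv]
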